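/- For all integers L ≥ 3, s ≥ 1 and k > s, the formal power series (q^s(1 − q^k) − (1 − q^s)) / (q^s;q)_{L+1} in ℤ[[q]] is eventually positive; that is, there exists an integer M ≥ 0 such that its coefficient of q^n is positive for all n > M. -/

import Mathlib

open PowerSeries Finset

set_option maxHeartbeats 1000000

noncomputable def sig (p : ℕ) : PowerSeries ℤ :=
  PowerSeries.mk fun m => if p ∣ m then 1 else 0

lemma coeff_sig (p m : ℕ) : coeff m (sig p) = if p ∣ m then 1 else 0 := by
  simp [sig]

lemma sig_unit (p : ℕ) (hp : 0 < p) : (1 - X ^ p) * sig p = 1 := by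
  ext n
  rw [sub_mul, one_mul, map_sub]
  rcases Nat.eq_zero_or_pos n with h0 | h0
  · subst h0
    simp [coeff_sig, coeff_zero_eq_constantCoeff, hp.ne']
  · rw [PowerSeries.coeff_X_pow_mul']
    by_cases hn : p ≤ n
    · simp only [hn, if_true, coeff_sig]
      have : p ∣ n ↔ p ∣ n - p := by
        constructor
        · intro h; exact (Nat.dvd_sub h dvd_rfl)
        · intro h; have := Nat.dvd_add h (dvd_refl p); rwa [Nat.sub_add_cancel hn] at this
      rw [coeff_one]
      simp only [h0.ne', if_false]
      by_cases hd : p ∣ n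
      · rw [if_pos hd, if_pos (this.mp hd)]; ring
      · rw [if_neg hd, if_neg (fun hh => hd (this.mpr hh))]; ring
    · simp only [hn, if_false, sub_zero, coeff_sig, coeff_one, h0.ne', if_false]
      have : ¬ p ∣ n := fun hd => hn (Nat.le_of_dvd h0 hd)
      simp [this]

lemma filter_dvd_image (p n : ℕ) (hp : 0 < p) :
    (range (n+1)).filter (fun i => p ∣ i) = (range (n/p + 1)).image (fun j => p * j) := by
  ext i
  simp only [mem_filter, mem_range, mem_image]
  constructor
  · rintro ⟨hin, j, rfl⟩
    exact ⟨j, by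
      have h1 : j ≤ n / p := Nat.le_div_iff_mul_le hp |>.mpr (by rw [mul_comm]; omega)
      omega, rfl⟩
  · rintro ⟨j, hj, rfl⟩
    have h1 : p * j ≤ n := by
      have : j ≤ n / p := by omega
      calc p * j ≤ p * (n / p) := Nat.mul_le_mul_left _ this
        _ ≤ n := by rw [mul_comm]; exact Nat.div_mul_le_self n p
    exact ⟨by omega, ⟨j, rfl⟩⟩

lemma coeff_sig_mul (p : ℕ) (hp : 0 < p) (F : PowerSeries ℤ) (n : ℕ) :
    coeff n (sig p * F) = ∑ j ∈ range (n / p + 1), coeff (n - p * j) F := by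
  rw [coeff_mul, Finset.Nat.sum_antidiagonal_eq_sum_range_succ_mk]
  simp only [coeff_sig, ite_mul, one_mul, zero_mul]
  rw [← Finset.sum_filter, filter_dvd_image _ _ hp,
    Finset.sum_image (fun a _ b _ h => Nat.eq_of_mul_eq_mul_left hp h)]

lemma coeff_mul_nonneg (F G : PowerSeries ℤ) (hF : ∀ m, 0 ≤ coeff m F)
    (hG : ∀ m, 0 ≤ coeff m G) : ∀ m, 0 ≤ coeff m (F * G) := by
  intro m
  rw [coeff_mul]
  exact Finset.sum_nonneg fun x _ => mul_nonneg (hF _) (hG _)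

lemma coeff_sig_nonneg (p : ℕ) : ∀ m, 0 ≤ coeff m (sig p) := by
  intro m; rw [coeff_sig]; split <;> norm_num

/-- counting elements of a residue class: upper bound -/
lemma card_res_upper (q z m : ℕ) (hq : 0 < q) :
    q * ((range m).filter (fun j => (j + z) % q = 0)).card ≤ m + q := by
  have hcard : ((range m).filter (fun j => (j + z) % q = 0)).card ≤ m / q + 1 := by
    have h := Finset.card_range (m / q + 1)
    rw [← h]
    apply Finset.card_le_card_of_injOn (fun j => j / q)
    · intro j hj
      simp only [mem_coe, mem_filter, mem_range] at hj
      have : j / q ≤ m / q := Nat.div_le_div_right hj.1.le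
      simp only [mem_coe, mem_range]; omega
    · intro j1 h1 j2 h2 e
      simp only [coe_filter, Set.mem_setOf_eq, mem_range] at h1 h2
      have hm : j1 % q = j2 % q := by
        have e1 : (j1 + z) % q = (j2 + z) % q := by rw [h1.2, h2.2]
        have := Nat.ModEq.add_right_cancel' z (e1 : j1 + z ≡ j2 + z [MOD q])
        exact this
      have d1 := Nat.div_add_mod j1 q
      have d2 := Nat.div_add_mod j2 q
      have : q * (j1 / q) = q * (j2 / q) := congrArg (fun x => q * x) e
      omega
  calc q * ((range m).filter (fun j => (j + z) % q = 0)).card ≤ q * (m / q + 1) :=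
        Nat.mul_le_mul_left _ hcard
    _ = q * (m / q) + q := by ring
    _ ≤ m + q := by
        have := Nat.div_mul_le_self m q
        rw [mul_comm]
        omega

/-- counting elements of a residue class: lower bound -/
lemma card_res_lower (q z m : ℕ) (hq : 0 < q) :
    m ≤ q * ((range m).filter (fun j => (j + z) % q = 0)).card + q := by
  set c := (q - z % q) % q with hc
  have hcq : c < q := Nat.mod_lt _ hq
  have hcz : (c + z) % q = 0 := by
    have hzq : z % q < q := Nat.mod_lt _ hq
    have hz := Nat.div_add_mod z q
    rcases Nat.eq_zero_or_pos (z % q) with h0 | h0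
    · have : c = 0 := by rw [hc, h0, Nat.sub_zero, Nat.mod_self]
      rw [this, Nat.zero_add]
      omega
    · have : c = q - z % q := by
        rw [hc]; exact Nat.mod_eq_of_lt (by omega)
      have : c + z = q + q * (z / q) := by omega
      rw [this]
      have : q + q * (z / q) = q * (1 + z / q) := by ring
      rw [this, Nat.mul_mod_right]
  by_cases hcm : m ≤ c
  · omega
  push_neg at hcm
  set T := (m - c - 1) / q + 1 with hT
  have hsub : (range T).image (fun t => c + q * t) ⊆
      (range m).filter (fun j => (j + z) % q = 0) := by
    intro i hi
    simp only [mem_image, mem_range] at hi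
    obtain ⟨t, ht, rfl⟩ := hi
    simp only [mem_filter, mem_range]
    constructor
    · have : q * t ≤ q * ((m - c - 1) / q) := Nat.mul_le_mul_left _ (by omega)
      have h2 : q * ((m - c - 1) / q) ≤ m - c - 1 := by
        rw [mul_comm]; exact Nat.div_mul_le_self _ _
      omega
    · have : c + q * t + z = (c + z) + q * t := by ring
      rw [this, Nat.add_mul_mod_self_left, hcz]
  have hcardT : T ≤ ((range m).filter (fun j => (j + z) % q = 0)).card := by
    have := Finset.card_le_card hsub
    rwa [Finset.card_image_of_injective _ (fun t1 t2 h => Nat.eq_of_mul_eq_mul_left hq (by omega)), Finset.card_range] at this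
  have hqT : m - c - 1 < q * T := by
    have hexp : q * T = q * ((m - c - 1) / q) + q := by rw [hT]; ring
    have := Nat.div_add_mod (m - c - 1) q
    have h2 : (m - c - 1) % q < q := Nat.mod_lt _ hq
    omega
  have := Nat.mul_le_mul_left q hcardT
  omega

lemma two_part_eq (p z : ℕ) (hp : 0 < p) :
    coeff z (sig p * sig (p+1)) =
      (((range (z/p + 1)).filter (fun j => (j + z) % (p+1) = 0)).card : ℤ) := by
  rw [coeff_sig_mul p hp]
  have h : ∀ j ∈ range (z/p + 1),
      coeff (z - p*j) (sig (p+1)) = if (j + z) % (p+1) = 0 then 1 else 0 := by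
    intro j hj
    simp only [mem_range] at hj
    have hpj : p * j ≤ z := by
      have h1 : j ≤ z / p := by omega
      calc p * j ≤ p * (z / p) := Nat.mul_le_mul_left _ h1
        _ ≤ z := by rw [mul_comm]; exact Nat.div_mul_le_self z p
    rw [coeff_sig]
    congr 1
    have hsplit : j + z = (z - p*j) + (p+1) * j := by
      have : (p+1) * j = p*j + j := by ring
      omega
    rw [eq_iff_iff, hsplit, Nat.add_mul_mod_self_left]
    exact ⟨fun hd => Nat.dvd_iff_mod_eq_zero.mp hd, fun hm => Nat.dvd_of_mod_eq_zero hm⟩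
  rw [Finset.sum_congr rfl h, Finset.sum_boole]

lemma two_part_upper (p z : ℕ) (hp : 0 < p) :
    ((p:ℤ)*(p+1)) * coeff z (sig p * sig (p+1)) ≤ (z : ℤ) + 2*((p:ℤ)*(p+1)) := by
  rw [two_part_eq p z hp]
  set cnt := ((range (z/p + 1)).filter (fun j => (j + z) % (p+1) = 0)).card with hcnt
  have h1 : (p+1) * cnt ≤ (z/p + 1) + (p+1) := card_res_upper (p+1) z (z/p + 1) (by omega)
  have h2 : p * (z/p) ≤ z := by rw [mul_comm]; exact Nat.div_mul_le_self z p
  have hN : p * ((p+1) * cnt) ≤ z + 2*(p*(p+1)) := by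
    calc p * ((p+1) * cnt) ≤ p * ((z/p + 1) + (p+1)) := Nat.mul_le_mul_left _ h1
      _ = p * (z/p) + p + p*(p+1) := by ring
      _ ≤ z + 2*(p*(p+1)) := by nlinarith
  have := (Nat.cast_le (α := ℤ)).mpr hN
  push_cast at this ⊢
  nlinarith [this]

lemma two_part_lower (p z : ℕ) (hp : 0 < p) :
    (z : ℤ) - 2*((p:ℤ)*(p+1)) ≤ ((p:ℤ)*(p+1)) * coeff z (sig p * sig (p+1)) := by
  rw [two_part_eq p z hp]
  set cnt := ((range (z/p + 1)).filter (fun j => (j + z) % (p+1) = 0)).card with hcnt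
  have h1 : (z/p + 1) ≤ (p+1) * cnt + (p+1) := card_res_lower (p+1) z (z/p + 1) (by omega)
  have h2 : z < p * (z/p) + p := by
    have := Nat.div_add_mod z p
    have := Nat.mod_lt z hp
    omega
  have hN : z ≤ p * ((p+1) * cnt) + 2*(p*(p+1)) := by
    have h3 : p * (z/p + 1) ≤ p * ((p+1) * cnt + (p+1)) := Nat.mul_le_mul_left _ h1
    nlinarith
  have := (Nat.cast_le (α := ℤ)).mpr hN
  push_cast at this ⊢
  nlinarith [this]

lemma EP_sig_mul (p : ℕ) (hp : 0 < p) (F : PowerSeries ℤ)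
    (h : ∃ M : ℕ, ∀ n : ℕ, M < n → 0 < coeff n F) :
    ∃ M : ℕ, ∀ n : ℕ, M < n → 0 < coeff n (sig p * F) := by
  obtain ⟨M, hM⟩ := h
  set C : ℤ := ∑ i ∈ range (M+1), |coeff i F| with hC
  have hC0 : 0 ≤ C := Finset.sum_nonneg fun i _ => abs_nonneg _
  set Ct : ℕ := C.toNat with hCt
  refine ⟨M + p * (Ct + 2) + p, fun n hn => ?_⟩
  rw [coeff_sig_mul p hp]
  have hndiv : Ct + 2 ≤ n / p := by
    rw [Nat.le_div_iff_mul_le hp, mul_comm]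
    omega
  have hsplit : range (n/p + 1) = range (Ct + 2) ∪ Ico (Ct + 2) (n/p + 1) := by
    simp only [Finset.range_eq_Ico]
    exact (Finset.Ico_union_Ico_eq_Ico (Nat.zero_le _) (by omega)).symm
  rw [hsplit, Finset.sum_union (by
    rw [Finset.range_eq_Ico]
    exact Finset.Ico_disjoint_Ico_consecutive 0 (Ct+2) (n/p+1))]
  have hfirst : (Ct + 2 : ℤ) ≤ ∑ j ∈ range (Ct + 2), coeff (n - p * j) F := by
    have : ∀ j ∈ range (Ct + 2), (1:ℤ) ≤ coeff (n - p * j) F := by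
      intro j hj
      simp only [mem_range] at hj
      apply hM
      have h3 : p * j ≤ p * (Ct + 1) := Nat.mul_le_mul_left _ (by omega)
      have h4 : p * (Ct + 2) = p * (Ct + 1) + p := by ring
      omega
    calc (Ct + 2 : ℤ) = ∑ j ∈ range (Ct + 2), (1:ℤ) := by simp
      _ ≤ _ := Finset.sum_le_sum this
  have hsecond : -C ≤ ∑ j ∈ Ico (Ct + 2) (n/p + 1), coeff (n - p * j) F := by
    have hterm : ∀ j ∈ Ico (Ct + 2) (n/p + 1),
        -(if n - p * j ≤ M then |coeff (n - p*j) F| else 0) ≤ coeff (n - p * j) F := by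
      intro j hj
      by_cases hle : n - p * j ≤ M
      · simp only [hle, if_true]
        exact neg_abs_le _
      · simp only [hle, if_false, neg_zero]
        push_neg at hle
        exact (hM _ hle).le
    calc -C ≤ -(∑ j ∈ Ico (Ct + 2) (n/p + 1),
          if n - p * j ≤ M then |coeff (n - p*j) F| else 0) := by
          apply neg_le_neg
          rw [Finset.sum_ite, Finset.sum_const_zero, add_zero, hC]
          set S := (Ico (Ct+2) (n/p+1)).filter (fun j => n - p*j ≤ M) with hS
          have hbnd : ∀ j ∈ S, p * j ≤ n := by
            intro j hj
            simp only [hS, mem_filter, mem_Ico] at hj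
            have : j ≤ n / p := by omega
            calc p * j ≤ p * (n/p) := Nat.mul_le_mul_left _ this
              _ ≤ n := by rw [mul_comm]; exact Nat.div_mul_le_self n p
          have hinj : ∀ j1 ∈ S, ∀ j2 ∈ S, n - p*j1 = n - p*j2 → j1 = j2 := by
            intro j1 h1 j2 h2 e
            have k1 := hbnd j1 h1
            have k2 := hbnd j2 h2
            have : p * j1 = p * j2 := by omega
            exact Nat.eq_of_mul_eq_mul_left hp this
          have himg : ∑ i ∈ S.image (fun j => n - p*j), |coeff i F|
              = ∑ j ∈ S, |coeff (n - p*j) F| :=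
            Finset.sum_image hinj
          rw [← himg]
          apply Finset.sum_le_sum_of_subset_of_nonneg
          · intro i hi
            simp only [mem_image] at hi
            obtain ⟨j, hj, rfl⟩ := hi
            simp only [hS, mem_filter, mem_Ico] at hj
            simp only [mem_range]
            omega
          · intro i _ _
            exact abs_nonneg _
      _ ≤ ∑ j ∈ Ico (Ct + 2) (n/p + 1), coeff (n - p * j) F := by
          rw [← Finset.sum_neg_distrib]
          exact Finset.sum_le_sum hterm
  have : (C:ℤ) = Ct := by rw [hCt, Int.toNat_of_nonneg hC0]
  linarith

noncomputable def Sig4 (s : ℕ) : PowerSeries ℤ :=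
  sig s * (sig (s+1) * (sig (s+2) * sig (s+3)))
noncomputable def Sig3 (s : ℕ) : PowerSeries ℤ :=
  sig (s+1) * (sig (s+2) * sig (s+3))
noncomputable def pr (s : ℕ) : ℕ → ℤ := fun z => coeff z (sig s * sig (s+1))
noncomputable def pw (s : ℕ) : ℕ → ℤ := fun z => coeff z (sig (s+2) * sig (s+3))

lemma pr_nn (s z : ℕ) : 0 ≤ pr s z :=
  coeff_mul_nonneg _ _ (coeff_sig_nonneg _) (coeff_sig_nonneg _) z

lemma pw_nn (s z : ℕ) : 0 ≤ pw s z :=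
  coeff_mul_nonneg _ _ (coeff_sig_nonneg _) (coeff_sig_nonneg _) z

lemma pr_up (s z : ℕ) (hs : 1 ≤ s) :
    (s:ℤ)*((s:ℤ)+1) * pr s z ≤ (z:ℤ) + 2*((s:ℤ)*((s:ℤ)+1)) := by
  have h := two_part_upper s z (by omega)
  push_cast at h
  unfold pr
  linarith

lemma pr_lo (s z : ℕ) (hs : 1 ≤ s) :
    (z:ℤ) - 2*((s:ℤ)*((s:ℤ)+1)) ≤ (s:ℤ)*((s:ℤ)+1) * pr s z := by
  have h := two_part_lower s z (by omega)
  push_cast at h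
  unfold pr
  linarith

lemma pw_up (s z : ℕ) : ((s:ℤ)+2)*((s:ℤ)+3) * pw s z ≤ (z:ℤ) + 2*(((s:ℤ)+2)*((s:ℤ)+3)) := by
  have h := two_part_upper (s+2) z (by omega)
  rw [(by omega : s+2+1 = s+3)] at h
  push_cast at h
  unfold pw
  ring_nf at h ⊢
  linarith

lemma pw_lo (s z : ℕ) : (z:ℤ) - 2*(((s:ℤ)+2)*((s:ℤ)+3)) ≤ ((s:ℤ)+2)*((s:ℤ)+3) * pw s z := by
  have h := two_part_lower (s+2) z (by omega)
  rw [(by omega : s+2+1 = s+3)] at h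
  push_cast at h
  unfold pw
  ring_nf at h ⊢
  linarith

lemma hA4 (s m : ℕ) : coeff m (Sig4 s) = ∑ v ∈ range (m+1), pw s v * pr s (m - v) := by
  have he : Sig4 s = (sig (s+2) * sig (s+3)) * (sig s * sig (s+1)) := by
    rw [Sig4]; ring
  rw [he, coeff_mul, Finset.Nat.sum_antidiagonal_eq_sum_range_succ_mk]
  rfl

lemma reindex_sum (k t : ℕ) (f : ℕ → ℤ) :
    ∑ v ∈ range (t+1), f v = ∑ v ∈ range (t+k+1), (if k ≤ v then f (v - k) else 0) := by
  rw [← Finset.sum_filter]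
  have himg : (range (t+k+1)).filter (fun v => k ≤ v)
      = (range (t+1)).image (fun u => u + k) := by
    ext v
    simp only [mem_filter, mem_range, mem_image]
    constructor
    · rintro ⟨h1, h2⟩; exact ⟨v - k, by omega, by omega⟩
    · rintro ⟨u, hu, rfl⟩; omega
  rw [himg, Finset.sum_image (fun x _ y _ h => by omega)]
  apply Finset.sum_congr rfl
  intro u _
  congr 1
  omega

lemma deltaA_lower (s k t : ℕ) (hs : 1 ≤ s) (hk1 : 1 ≤ k) :
    (k:ℤ)*((t:ℤ)^2 - 4*(((s:ℤ)+2)*((s:ℤ)+3))*((t:ℤ)+1))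
      - 4*((s:ℤ)*((s:ℤ)+1))*((k:ℤ) + 4*(((s:ℤ)+2)*((s:ℤ)+3)))*((t:ℤ)+(k:ℤ)+1)
    ≤ 2*((s:ℤ)*((s:ℤ)+1))*(((s:ℤ)+2)*((s:ℤ)+3))
      * (coeff (t+k) (Sig4 s) - coeff t (Sig4 s)) := by
  set a : ℤ := (s:ℤ)*((s:ℤ)+1) with hadef
  set c : ℤ := ((s:ℤ)+2)*((s:ℤ)+3) with hcdef
  set Ck : ℤ := (k:ℤ) + 4*c with hCkdef
  have hS1 : (1:ℤ) ≤ (s:ℤ) := by exact_mod_cast hs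
  have hK1 : (1:ℤ) ≤ (k:ℤ) := by exact_mod_cast hk1
  have ha0 : 0 < a := by rw [hadef]; nlinarith
  have hc0 : 0 < c := by rw [hcdef]; nlinarith
  have hCk0 : 0 < Ck := by rw [hCkdef]; nlinarith
  set D : ℕ → ℤ := fun v => pw s v - (if k ≤ v then pw s (v - k) else 0) with hDdef
  -- coefficient expressions
  have h1 : coeff (t+k) (Sig4 s) = ∑ v ∈ range (t+k+1), pw s v * pr s (t+k-v) := hA4 s (t+k)
  have h2 : coeff t (Sig4 s)
      = ∑ v ∈ range (t+k+1), (if k ≤ v then pw s (v-k) * pr s (t+k-v) else 0) := by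
    rw [hA4, reindex_sum k t (fun v => pw s v * pr s (t - v))]
    apply Finset.sum_congr rfl
    intro v _
    by_cases hkv : k ≤ v
    · simp only [hkv, if_true]
      congr 2
      omega
    · simp only [hkv, if_false]
  have hΔ : coeff (t+k) (Sig4 s) - coeff t (Sig4 s)
      = ∑ v ∈ range (t+k+1), D v * pr s (t+k-v) := by
    rw [h1, h2, ← Finset.sum_sub_distrib]
    apply Finset.sum_congr rfl
    intro v _
    by_cases hkv : k ≤ v
    · simp only [hDdef, hkv, if_true]; ring
    · simp only [hDdef, hkv, if_false]; ring
  -- bound on D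
  have hDb : ∀ v ∈ range (t+k+1), |c * D v| ≤ Ck := by
    intro v hv
    by_cases hkv : k ≤ v
    · have u1 := pw_up s v
      have l1 := pw_lo s v
      have u2 := pw_up s (v-k)
      have l2 := pw_lo s (v-k)
      have hcast : ((v-k:ℕ):ℤ) = (v:ℤ) - (k:ℤ) := by
        rw [Nat.cast_sub hkv]
      rw [hcast] at u2 l2
      rw [← hcdef] at u1 l1 u2 l2
      have hDv : c * D v = c * pw s v - c * pw s (v-k) := by
        simp only [hDdef, hkv, if_true]; ring
      rw [abs_le, hDv, hCkdef]
      constructor <;> linarith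
    · have u1 := pw_up s v
      rw [← hcdef] at u1
      have hDv : c * D v = c * pw s v := by
        simp only [hDdef, hkv, if_false]; ring
      have hvk : (v:ℤ) + 1 ≤ (k:ℤ) := by exact_mod_cast (by omega : v + 1 ≤ k)
      rw [hDv, abs_of_nonneg (mul_nonneg hc0.le (pw_nn s v)), hCkdef]
      linarith
  -- key summation identity / bound
  have hkey : (k:ℤ) * (∑ u ∈ range (t+1), pw s u)
      ≤ ∑ v ∈ range (t+k+1), D v * ((t:ℤ)+(k:ℤ)-(v:ℤ)) := by
    have e1 : ∑ v ∈ range (t+k+1), D v * ((t:ℤ)+(k:ℤ)-(v:ℤ))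
        = ∑ v ∈ range (t+k+1), pw s v * ((t:ℤ)+(k:ℤ)-(v:ℤ))
          - ∑ v ∈ range (t+k+1), (if k ≤ v then pw s (v-k) * ((t:ℤ)+(k:ℤ)-(v:ℤ)) else 0) := by
      rw [← Finset.sum_sub_distrib]
      apply Finset.sum_congr rfl
      intro v _
      by_cases hkv : k ≤ v
      · simp only [hDdef, hkv, if_true]; ring
      · simp only [hDdef, hkv, if_false]; ring
    have e2 : ∑ v ∈ range (t+k+1), (if k ≤ v then pw s (v-k) * ((t:ℤ)+(k:ℤ)-(v:ℤ)) else 0)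
        = ∑ u ∈ range (t+1), pw s u * ((t:ℤ)-(u:ℤ)) := by
      rw [reindex_sum k t (fun u => pw s u * ((t:ℤ)-(u:ℤ)))]
      apply Finset.sum_congr rfl
      intro v _
      by_cases hkv : k ≤ v
      · simp only [hkv, if_true]
        have : ((v-k:ℕ):ℤ) = (v:ℤ) - (k:ℤ) := by rw [Nat.cast_sub hkv]
        rw [this]
        ring_nf
      · simp only [hkv, if_false]
    have e3 : ∑ v ∈ range (t+1), pw s v * ((t:ℤ)+(k:ℤ)-(v:ℤ))
        ≤ ∑ v ∈ range (t+k+1), pw s v * ((t:ℤ)+(k:ℤ)-(v:ℤ)) := by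
      apply Finset.sum_le_sum_of_subset_of_nonneg
      · exact Finset.range_subset_range.mpr (by omega)
      · intro v hv _
        simp only [mem_range] at hv
        have hvle : (v:ℤ) ≤ (t:ℤ)+(k:ℤ) := by exact_mod_cast by omega
        exact mul_nonneg (pw_nn s v) (by linarith)
    have e4 : ∑ v ∈ range (t+1), pw s v * ((t:ℤ)+(k:ℤ)-(v:ℤ))
        - ∑ u ∈ range (t+1), pw s u * ((t:ℤ)-(u:ℤ)) = (k:ℤ) * (∑ u ∈ range (t+1), pw s u) := by
      rw [← Finset.sum_sub_distrib, Finset.mul_sum]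
      apply Finset.sum_congr rfl
      intro v _
      ring
    linarith
  -- lower bound on a*c*Δ
  have hstep : c*((k:ℤ)*(∑ u ∈ range (t+1), pw s u)) - (2*a*Ck)*((t:ℤ)+(k:ℤ)+1)
      ≤ a*c*(coeff (t+k) (Sig4 s) - coeff t (Sig4 s)) := by
    have hterm : ∀ v ∈ range (t+k+1),
        (c * D v)*((t:ℤ)+(k:ℤ)-(v:ℤ)) - (2*a*Ck) ≤ a*c*(D v * pr s (t+k-v)) := by
      intro v hv
      simp only [mem_range] at hv
      have hcast : ((t+k-v:ℕ):ℤ) = (t:ℤ)+(k:ℤ)-(v:ℤ) := by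
        rw [Nat.cast_sub (by omega)]; push_cast; ring
      have hup := pr_up s (t+k-v) hs
      have hlo := pr_lo s (t+k-v) hs
      rw [hcast] at hup hlo
      rw [← hadef] at hup hlo
      have habs : |a * pr s (t+k-v) - ((t:ℤ)+(k:ℤ)-(v:ℤ))| ≤ 2*a := by
        rw [abs_le]; constructor <;> linarith
      have hD' := hDb v (by simp only [mem_range]; omega)
      have h3 : |(c*D v) * (a * pr s (t+k-v) - ((t:ℤ)+(k:ℤ)-(v:ℤ)))| ≤ Ck*(2*a) := by
        rw [abs_mul]
        exact mul_le_mul hD' habs (abs_nonneg _) (le_trans (abs_nonneg _) hD')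
      have h4 : -(Ck*(2*a)) ≤ (c*D v) * (a * pr s (t+k-v) - ((t:ℤ)+(k:ℤ)-(v:ℤ))) :=
        neg_le_of_abs_le h3
      have h5 : a*c*(D v * pr s (t+k-v))
          = (c*D v)*((t:ℤ)+(k:ℤ)-(v:ℤ)) + (c*D v) * (a * pr s (t+k-v) - ((t:ℤ)+(k:ℤ)-(v:ℤ))) := by
        ring
      rw [h5]
      linarith
    have hsum := Finset.sum_le_sum hterm
    rw [Finset.sum_sub_distrib, Finset.sum_const, Finset.card_range] at hsum
    have e5 : ∑ v ∈ range (t+k+1), (c * D v)*((t:ℤ)+(k:ℤ)-(v:ℤ))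
        = c * ∑ v ∈ range (t+k+1), D v * ((t:ℤ)+(k:ℤ)-(v:ℤ)) := by
      rw [Finset.mul_sum]
      apply Finset.sum_congr rfl
      intro v _
      ring
    rw [e5, nsmul_eq_mul] at hsum
    push_cast at hsum
    have e6 : c * ((k:ℤ)*(∑ u ∈ range (t+1), pw s u))
        ≤ c * ∑ v ∈ range (t+k+1), D v * ((t:ℤ)+(k:ℤ)-(v:ℤ)) :=
      mul_le_mul_of_nonneg_left hkey hc0.le
    have hmain : a*c*(coeff (t+k) (Sig4 s) - coeff t (Sig4 s))
        = ∑ v ∈ range (t+k+1), a*c*(D v * pr s (t+k-v)) := by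
      rw [hΔ, Finset.mul_sum]
    linarith [hsum, e6, hmain]
  -- lower bound for W
  have hW : (t:ℤ)^2 - 4*c*((t:ℤ)+1) ≤ 2*c*(∑ u ∈ range (t+1), pw s u) := by
    have hterms : ∀ u ∈ range (t+1), 2*(u:ℤ) - 4*c ≤ 2*(c * pw s u) := by
      intro u _
      have := pw_lo s u
      rw [← hcdef] at this
      linarith
    have hsum := Finset.sum_le_sum hterms
    have egauss : (∑ u ∈ range (t+1), (u:ℤ)) * 2 = ((t:ℤ)+1)*(t:ℤ) := by
      have h := Finset.sum_range_id_mul_two (t+1)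
      rw [Nat.add_sub_cancel] at h
      have h2 : ((∑ i ∈ range (t+1), i : ℕ):ℤ) * 2 = (((t+1)*t : ℕ):ℤ) := by
        exact_mod_cast congrArg (fun x : ℕ => (x:ℤ)) h
      push_cast at h2
      exact h2
    have eL : ∑ u ∈ range (t+1), (2*(u:ℤ) - 4*c) = (∑ u ∈ range (t+1), (u:ℤ))*2 - ((t:ℤ)+1)*(4*c) := by
      rw [Finset.sum_sub_distrib, Finset.sum_const, Finset.card_range, nsmul_eq_mul]
      push_cast
      rw [Finset.sum_mul]
      congr 1
      · apply Finset.sum_congr rfl; intro u _; ring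
    have eR : ∑ u ∈ range (t+1), 2*(c * pw s u) = 2*c*(∑ u ∈ range (t+1), pw s u) := by
      rw [Finset.mul_sum]
      apply Finset.sum_congr rfl; intro u _; ring
    rw [eL, eR, egauss] at hsum
    have ht0 : (0:ℤ) ≤ (t:ℤ) := Int.natCast_nonneg t
    nlinarith [hsum]
  -- conclude
  have hfin : (k:ℤ) * ((t:ℤ)^2 - 4*c*((t:ℤ)+1)) ≤ (k:ℤ) * (2*c*(∑ u ∈ range (t+1), pw s u)) :=
    mul_le_mul_of_nonneg_left hW (by linarith)
  have h9 : 2*(a*c*(coeff (t+k) (Sig4 s) - coeff t (Sig4 s)))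
      ≥ 2*(c*((k:ℤ)*(∑ u ∈ range (t+1), pw s u)) - (2*a*Ck)*((t:ℤ)+(k:ℤ)+1)) := by linarith
  calc (k:ℤ)*((t:ℤ)^2 - 4*c*((t:ℤ)+1)) - 4*a*Ck*((t:ℤ)+(k:ℤ)+1)
      ≤ (k:ℤ)*(2*c*(∑ u ∈ range (t+1), pw s u)) - 4*a*Ck*((t:ℤ)+(k:ℤ)+1) := by linarith
    _ = 2*(c*((k:ℤ)*(∑ u ∈ range (t+1), pw s u)) - (2*a*Ck)*((t:ℤ)+(k:ℤ)+1)) := by ring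
    _ ≤ 2*a*c*(coeff (t+k) (Sig4 s) - coeff t (Sig4 s)) := by linarith

lemma B_upper (s n : ℕ) (hs : 1 ≤ s) :
    2*(((s:ℤ)+2)*((s:ℤ)+3))*((s:ℤ)+1) * coeff n (Sig3 s)
      ≤ ((n:ℤ) + (s:ℤ) + 1 + 4*(((s:ℤ)+2)*((s:ℤ)+3)))^2 := by
  set c : ℤ := ((s:ℤ)+2)*((s:ℤ)+3) with hcdef
  have hS1 : (1:ℤ) ≤ (s:ℤ) := by exact_mod_cast hs
  have hc0 : 0 < c := by rw [hcdef]; nlinarith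
  have hBnn : 0 ≤ coeff n (Sig3 s) := by
    rw [Sig3]
    exact coeff_mul_nonneg _ _ (coeff_sig_nonneg _)
      (coeff_mul_nonneg _ _ (coeff_sig_nonneg _) (coeff_sig_nonneg _)) n
  have hB : coeff n (Sig3 s) = ∑ j ∈ range (n/(s+1)+1), pw s (n - (s+1)*j) := by
    rw [Sig3]
    exact coeff_sig_mul (s+1) (by omega) _ n
  set m : ℕ := n/(s+1) with hmdef
  have hm1 : (s+1)*m ≤ n := by
    rw [hmdef, mul_comm]; exact Nat.div_mul_le_self n (s+1)
  have hm2 : n < (s+1)*(m+1) := by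
    have hdm : (s+1)*m + n%(s+1) = n := by rw [hmdef]; exact Nat.div_add_mod n (s+1)
    have hlt : n % (s+1) < s+1 := Nat.mod_lt _ (by omega)
    have hexp : (s+1)*(m+1) = (s+1)*m + (s+1) := by ring
    omega
  have hm1c : ((s:ℤ)+1)*(m:ℤ) ≤ (n:ℤ) := by exact_mod_cast hm1
  have hm2c : (n:ℤ) + 1 ≤ ((s:ℤ)+1)*((m:ℤ)+1) := by exact_mod_cast hm2
  have hM0 : (0:ℤ) ≤ (m:ℤ) := Int.natCast_nonneg m
  have hN0 : (0:ℤ) ≤ (n:ℤ) := Int.natCast_nonneg n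
  -- sum bound
  have hterm : ∀ j ∈ range (m+1),
      c * pw s (n - (s+1)*j) ≤ ((n:ℤ) + 2*c) - ((s:ℤ)+1)*(j:ℤ) := by
    intro j hj
    simp only [mem_range] at hj
    have hjm : (s+1)*j ≤ n := by
      have : j ≤ m := by omega
      calc (s+1)*j ≤ (s+1)*m := Nat.mul_le_mul_left _ this
        _ ≤ n := hm1
    have hcast : ((n - (s+1)*j : ℕ):ℤ) = (n:ℤ) - ((s:ℤ)+1)*(j:ℤ) := by
      rw [Nat.cast_sub hjm]; push_cast; ring
    have := pw_up s (n - (s+1)*j)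
    rw [← hcdef, hcast] at this
    linarith
  have hsum : c * coeff n (Sig3 s) ≤ ∑ j ∈ range (m+1), (((n:ℤ) + 2*c) - ((s:ℤ)+1)*(j:ℤ)) := by
    rw [hB, Finset.mul_sum]
    exact Finset.sum_le_sum hterm
  have egauss : (∑ j ∈ range (m+1), (j:ℤ)) * 2 = ((m:ℤ)+1)*(m:ℤ) := by
    have h := Finset.sum_range_id_mul_two (m+1)
    rw [Nat.add_sub_cancel] at h
    have h2 : ((∑ i ∈ range (m+1), i : ℕ):ℤ) * 2 = (((m+1)*m : ℕ):ℤ) := by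
      exact_mod_cast congrArg (fun x : ℕ => (x:ℤ)) h
    push_cast at h2
    exact h2
  have hsum2 : ∑ j ∈ range (m+1), (((n:ℤ) + 2*c) - ((s:ℤ)+1)*(j:ℤ))
      = ((m:ℤ)+1)*((n:ℤ)+2*c) - ((s:ℤ)+1)*(∑ j ∈ range (m+1), (j:ℤ)) := by
    rw [Finset.sum_sub_distrib, Finset.sum_const, Finset.card_range, nsmul_eq_mul,
      Finset.mul_sum]
    push_cast
    ring
  -- assemble
  have hc1 : 2*c*coeff n (Sig3 s)
      ≤ 2*((m:ℤ)+1)*((n:ℤ)+2*c) - ((s:ℤ)+1)*((m:ℤ)+1)*(m:ℤ) := by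
    have := hsum.trans hsum2.le
    nlinarith [egauss]
  have hU : ((s:ℤ)+1)*((m:ℤ)+1) ≤ (n:ℤ) + (s:ℤ) + 1 := by nlinarith
  have hV2 : 2*((n:ℤ)+2*c) - ((s:ℤ)+1)*(m:ℤ) ≤ (n:ℤ) + (s:ℤ) + 4*c := by nlinarith
  have hV0 : 0 ≤ 2*((n:ℤ)+2*c) - ((s:ℤ)+1)*(m:ℤ) := by nlinarith
  have hprod : (((s:ℤ)+1)*((m:ℤ)+1)) * (2*((n:ℤ)+2*c) - ((s:ℤ)+1)*(m:ℤ))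
      ≤ ((n:ℤ) + (s:ℤ) + 1) * ((n:ℤ) + (s:ℤ) + 4*c) := by
    apply mul_le_mul hU hV2 hV0 (by linarith)
  have hid : (((s:ℤ)+1)*((m:ℤ)+1)) * (2*((n:ℤ)+2*c) - ((s:ℤ)+1)*(m:ℤ))
      = ((s:ℤ)+1) * (2*((m:ℤ)+1)*((n:ℤ)+2*c) - ((s:ℤ)+1)*((m:ℤ)+1)*(m:ℤ)) := by
    ring
  have hmul : ((s:ℤ)+1) * (2*c*coeff n (Sig3 s))
      ≤ ((s:ℤ)+1) * (2*((m:ℤ)+1)*((n:ℤ)+2*c) - ((s:ℤ)+1)*((m:ℤ)+1)*(m:ℤ)) :=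
    mul_le_mul_of_nonneg_left hc1 (by linarith)
  have hfin : ((n:ℤ) + (s:ℤ) + 1) * ((n:ℤ) + (s:ℤ) + 4*c) ≤ ((n:ℤ) + (s:ℤ) + 1 + 4*c)^2 := by
    nlinarith
  calc 2*c*((s:ℤ)+1) * coeff n (Sig3 s)
      = ((s:ℤ)+1) * (2*c*coeff n (Sig3 s)) := by ring
    _ ≤ ((s:ℤ)+1) * (2*((m:ℤ)+1)*((n:ℤ)+2*c) - ((s:ℤ)+1)*((m:ℤ)+1)*(m:ℤ)) := hmul
    _ = (((s:ℤ)+1)*((m:ℤ)+1)) * (2*((n:ℤ)+2*c) - ((s:ℤ)+1)*(m:ℤ)) := hid.symm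
    _ ≤ ((n:ℤ) + (s:ℤ) + 1) * ((n:ℤ) + (s:ℤ) + 4*c) := hprod
    _ ≤ ((n:ℤ) + (s:ℤ) + 1 + 4*c)^2 := hfin

lemma coeff_core (s k t : ℕ) (hs : 1 ≤ s) :
    coeff (t+k+s) ((X^s * (1 - X^k) - (1 - (X:PowerSeries ℤ)^s)) * Sig4 s)
      = coeff (t+k) (Sig4 s) - coeff t (Sig4 s) - coeff (t+k+s) (Sig3 s) := by
  have h1 : (1 - X^s) * sig s = 1 := sig_unit s hs
  have hexp : (X^s * (1 - X^k) - (1 - (X:PowerSeries ℤ)^s)) * Sig4 s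
      = X^s * Sig4 s - X^(k+s) * Sig4 s - Sig3 s := by
    rw [Sig4, Sig3]
    calc (X^s * (1 - X^k) - (1 - (X:PowerSeries ℤ)^s))
          * (sig s * (sig (s+1) * (sig (s+2) * sig (s+3))))
        = X^s * (sig s * (sig (s+1) * (sig (s+2) * sig (s+3))))
          - X^(k+s) * (sig s * (sig (s+1) * (sig (s+2) * sig (s+3))))
          - ((1 - X^s) * sig s) * (sig (s+1) * (sig (s+2) * sig (s+3))) := by
          rw [pow_add]; ring
      _ = _ := by rw [h1, one_mul]
  rw [hexp, map_sub, map_sub, PowerSeries.coeff_X_pow_mul]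
  congr 2
  have e : t+k+s = t+(k+s) := by omega
  rw [e, PowerSeries.coeff_X_pow_mul]

lemma final_arith (Sv Kv T DA Bv : ℤ) (hS : 1 ≤ Sv) (hK : Sv + 1 ≤ Kv) (hT0 : 0 ≤ T)
    (hDA : Kv*(T^2 - 4*((Sv+2)*(Sv+3))*(T+1))
            - 4*(Sv*(Sv+1))*(Kv + 4*((Sv+2)*(Sv+3)))*(T+Kv+1)
          ≤ 2*(Sv*(Sv+1))*((Sv+2)*(Sv+3)) * DA)
    (hB : 2*((Sv+2)*(Sv+3))*(Sv+1) * Bv ≤ (T + Kv + Sv + Sv + 1 + 4*((Sv+2)*(Sv+3)))^2)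
    (hT : 2*(Sv*(Sv+1))*(Kv + 2*Sv + 1 + 4*((Sv+2)*(Sv+3))) + 4*Kv*((Sv+2)*(Sv+3))
          + 4*(Sv*(Sv+1))*(Kv + 4*((Sv+2)*(Sv+3)))
          + (Sv*(Sv+1))*(Kv + 2*Sv + 1 + 4*((Sv+2)*(Sv+3)))^2 + 4*Kv*((Sv+2)*(Sv+3))
          + 4*(Sv*(Sv+1))*(Kv + 4*((Sv+2)*(Sv+3)))*(Kv+1) < T) :
    0 < DA - Bv := by
  set a : ℤ := Sv*(Sv+1) with hadef
  set c : ℤ := (Sv+2)*(Sv+3) with hcdef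
  set Ck : ℤ := Kv + 4*c with hCkdef
  set Q : ℤ := Kv + 2*Sv + 1 + 4*c with hQdef
  set G1 : ℤ := 2*a*Q + 4*Kv*c + 4*a*Ck with hG1def
  set G0 : ℤ := a*Q^2 + 4*Kv*c + 4*a*Ck*(Kv+1) with hG0def
  have ha0 : 0 < a := by rw [hadef]; nlinarith
  have hc0 : 0 < c := by rw [hcdef]; nlinarith
  have hK1 : 1 ≤ Kv := by linarith
  have hCk0 : 0 < Ck := by rw [hCkdef]; linarith
  have hQ0 : 0 < Q := by rw [hQdef]; linarith
  have hG1nn : 0 ≤ G1 := by rw [hG1def]; positivity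
  have hG0nn : 0 ≤ G0 := by rw [hG0def]; positivity
  have hTgt : G1 + G0 < T := by
    rw [hG1def, hG0def]
    calc 2*a*Q + 4*Kv*c + 4*a*Ck + (a*Q^2 + 4*Kv*c + 4*a*Ck*(Kv+1))
        = 2*a*Q + 4*Kv*c + 4*a*Ck + a*Q^2 + 4*Kv*c + 4*a*Ck*(Kv+1) := by ring
      _ < T := hT
  have hT1 : 1 ≤ T := by linarith
  have step1 : G1*T + G0 < T^2 := by
    have i1 : (G1+G0+1)*T ≤ T*T := mul_le_mul_of_nonneg_right (by linarith) (by linarith)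
    have i2 : G0*1 ≤ G0*T := mul_le_mul_of_nonneg_left hT1 hG0nn
    have i3 : T^2 = T*T := sq T
    linarith
  have step2 : 2*a*Q*T + a*Q^2 + 4*Kv*c*(T+1) + 4*a*Ck*(T+Kv+1) < T^2 := by
    have hexp : G1*T + G0
        = 2*a*Q*T + a*Q^2 + 4*Kv*c*(T+1) + 4*a*Ck*(T+Kv+1) := by
      rw [hG1def, hG0def]; ring
    linarith [step1, hexp.symm.le, hexp.le]
  have f1 : a*T^2 + (Sv+1)*T^2 ≤ (Sv+1)*Kv*T^2 := by
    have h := mul_nonneg (mul_nonneg (by linarith : (0:ℤ) ≤ Sv+1) (by linarith : (0:ℤ) ≤ Kv - Sv - 1)) (sq_nonneg T)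
    rw [hadef]
    nlinarith [h]
  have f2 : (Sv+1)*(2*a*Q*T + a*Q^2 + 4*Kv*c*(T+1) + 4*a*Ck*(T+Kv+1)) < (Sv+1)*T^2 :=
    mul_lt_mul_of_pos_left step2 (by linarith)
  have f3 : a*(2*Q*T + Q^2) ≤ (Sv+1)*(2*a*Q*T + a*Q^2) := by
    have hnn : 0 ≤ 2*a*Q*T + a*Q^2 := by positivity
    nlinarith [mul_nonneg (by linarith : (0:ℤ) ≤ Sv) hnn]
  have key : a*(T+Q)^2 < (Sv+1)*(Kv*(T^2 - 4*c*(T+1)) - 4*a*Ck*(T+Kv+1)) := by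
    have e1 : (Sv+1)*(Kv*(T^2 - 4*c*(T+1)) - 4*a*Ck*(T+Kv+1))
        = (Sv+1)*Kv*T^2 - (Sv+1)*(4*Kv*c*(T+1)) - (Sv+1)*(4*a*Ck*(T+Kv+1)) := by ring
    have e2 : a*(T+Q)^2 = a*T^2 + a*(2*Q*T + Q^2) := by ring
    linarith [f1, f2, f3, e1.le, e1.ge, e2.le, e2.ge]
  -- combine
  have m1 : (Sv+1)*(Kv*(T^2 - 4*c*(T+1)) - 4*a*Ck*(T+Kv+1))
      ≤ (Sv+1)*(2*a*c*DA) :=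
    mul_le_mul_of_nonneg_left hDA (by linarith)
  have e3 : T + Kv + Sv + Sv + 1 + 4*c = T + Q := by rw [hQdef]; ring
  rw [e3] at hB
  have m2 : a*(2*c*(Sv+1)*Bv) ≤ a*(T+Q)^2 := by
    apply mul_le_mul_of_nonneg_left _ ha0.le
    calc 2*c*(Sv+1)*Bv = 2*c*(Sv+1) * Bv := by ring
      _ ≤ (T+Q)^2 := hB
  have hposf : 0 < 2*a*c*(Sv+1) := by positivity
  have hfinal : 2*a*c*(Sv+1)*Bv < 2*a*c*(Sv+1)*DA := by
    have l1 : 2*a*c*(Sv+1)*Bv = a*(2*c*(Sv+1)*Bv) := by ring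
    have l2 : 2*a*c*(Sv+1)*DA = (Sv+1)*(2*a*c*DA) := by ring
    rw [l1, l2]
    calc a*(2*c*(Sv+1)*Bv) ≤ a*(T+Q)^2 := m2
      _ < (Sv+1)*(Kv*(T^2 - 4*c*(T+1)) - 4*a*Ck*(T+Kv+1)) := key
      _ ≤ (Sv+1)*(2*a*c*DA) := m1
  have := (mul_lt_mul_iff_right₀ hposf).mp hfinal
  linarith

lemma core (s k : ℕ) (hs : 1 ≤ s) (hk : s < k) :
    ∃ M : ℕ, ∀ n : ℕ, M < n →
      0 < coeff n ((X^s * (1 - X^k) - (1 - (X:PowerSeries ℤ)^s)) * Sig4 s) := by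
  set Bnd : ℤ := 2*((s:ℤ)*((s:ℤ)+1))*((k:ℤ) + 2*(s:ℤ) + 1 + 4*(((s:ℤ)+2)*((s:ℤ)+3)))
      + 4*(k:ℤ)*(((s:ℤ)+2)*((s:ℤ)+3))
      + 4*((s:ℤ)*((s:ℤ)+1))*((k:ℤ) + 4*(((s:ℤ)+2)*((s:ℤ)+3)))
      + ((s:ℤ)*((s:ℤ)+1))*((k:ℤ) + 2*(s:ℤ) + 1 + 4*(((s:ℤ)+2)*((s:ℤ)+3)))^2
      + 4*(k:ℤ)*(((s:ℤ)+2)*((s:ℤ)+3))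
      + 4*((s:ℤ)*((s:ℤ)+1))*((k:ℤ) + 4*(((s:ℤ)+2)*((s:ℤ)+3)))*((k:ℤ)+1) with hBnddef
  refine ⟨Bnd.toNat + k + s, fun n hn => ?_⟩
  have hnt : n = (n - (k+s)) + k + s := by omega
  rw [hnt, coeff_core s k (n - (k+s)) hs]
  have hΔ := deltaA_lower s k (n - (k+s)) hs (by omega)
  have hBu := B_upper s ((n - (k+s))+k+s) hs
  have hcast : (((n - (k+s))+k+s : ℕ):ℤ) = ((n - (k+s):ℕ):ℤ)+(k:ℤ)+(s:ℤ) := by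
    push_cast; ring
  rw [hcast] at hBu
  apply final_arith (s:ℤ) (k:ℤ) ((n - (k+s) : ℕ):ℤ) _ _
    (by exact_mod_cast hs) (by exact_mod_cast hk) (Int.natCast_nonneg _) hΔ hBu
  have h1 : ((Bnd.toNat : ℕ) : ℤ) + 1 ≤ ((n - (k+s) : ℕ):ℤ) := by
    have h2 : Bnd.toNat + 1 ≤ n - (k+s) := by omega
    exact_mod_cast h2
  calc 2*((s:ℤ)*((s:ℤ)+1))*((k:ℤ) + 2*(s:ℤ) + 1 + 4*(((s:ℤ)+2)*((s:ℤ)+3)))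
      + 4*(k:ℤ)*(((s:ℤ)+2)*((s:ℤ)+3))
      + 4*((s:ℤ)*((s:ℤ)+1))*((k:ℤ) + 4*(((s:ℤ)+2)*((s:ℤ)+3)))
      + ((s:ℤ)*((s:ℤ)+1))*((k:ℤ) + 2*(s:ℤ) + 1 + 4*(((s:ℤ)+2)*((s:ℤ)+3)))^2
      + 4*(k:ℤ)*(((s:ℤ)+2)*((s:ℤ)+3))
      + 4*((s:ℤ)*((s:ℤ)+1))*((k:ℤ) + 4*(((s:ℤ)+2)*((s:ℤ)+3)))*((k:ℤ)+1)
      = Bnd := hBnddef.symm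
    _ ≤ ((Bnd.toNat : ℕ) : ℤ) := Int.self_le_toNat _
    _ < ((n - (k+s) : ℕ):ℤ) := by linarith

lemma EP_congr {F G : PowerSeries ℤ} (h : F = G)
    (hF : ∃ M : ℕ, ∀ n : ℕ, M < n → 0 < coeff n F) :
    ∃ M : ℕ, ∀ n : ℕ, M < n → 0 < coeff n G := h ▸ hF

theorem stmt_2 (L s k : ℕ) (hL : 3 ≤ L) (hs : 1 ≤ s) (hk : s < k)
    (H : PowerSeries ℤ)
    -- `H` is the quotient `(q^s(1 - q^k) - (1 - q^s)) / (q^s;q)_{L+1}`,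
    -- characterized by multiplying through by `(q^s;q)_{L+1} = ∏_{i=0}^{L} (1 - q^{s+i})`,
    -- which has constant term 1 and hence is invertible in ℤ[[q]].
    (hH : H * ∏ i ∈ Finset.range (L + 1), (1 - (X : PowerSeries ℤ) ^ (s + i))
        = X ^ s * (1 - X ^ k) - (1 - X ^ s)) :
    ∃ M : ℕ, ∀ n : ℕ, M < n → 0 < coeff n H := by
  have hD : (∏ i ∈ Finset.range (L+1), (1 - (X : PowerSeries ℤ) ^ (s+i)))
      * (∏ i ∈ Finset.range (L+1), sig (s+i)) = 1 := by
    rw [← Finset.prod_mul_distrib]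
    rw [Finset.prod_congr rfl (fun i _ => sig_unit (s+i) (by omega))]
    exact Finset.prod_const_one
  have hHexp : H = (X ^ s * (1 - X ^ k) - (1 - X ^ s))
      * ∏ i ∈ Finset.range (L+1), sig (s+i) := by
    calc H = H * ((∏ i ∈ Finset.range (L+1), (1 - (X : PowerSeries ℤ) ^ (s+i)))
        * (∏ i ∈ Finset.range (L+1), sig (s+i))) := by rw [hD, mul_one]
      _ = (H * ∏ i ∈ Finset.range (L+1), (1 - (X : PowerSeries ℤ) ^ (s+i)))
          * ∏ i ∈ Finset.range (L+1), sig (s+i) := by ring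
      _ = (X ^ s * (1 - X ^ k) - (1 - X ^ s)) * ∏ i ∈ Finset.range (L+1), sig (s+i) := by
          rw [hH]
  have hsplit : ∏ i ∈ Finset.range (L+1), sig (s+i)
      = Sig4 s * ∏ i ∈ Finset.range (L-3), sig (s+(4+i)) := by
    have hL1 : L + 1 = 4 + (L-3) := by omega
    rw [hL1, Finset.prod_range_add]
    congr 1
    · show ∏ i ∈ Finset.range 4, sig (s+i) = Sig4 s
      rw [Sig4]
      rw [Finset.prod_range_succ, Finset.prod_range_succ, Finset.prod_range_succ,
        Finset.prod_range_one]
      rw [(by omega : s + 0 = s)]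
      ring
  have hEP : ∀ j : ℕ, ∃ M : ℕ, ∀ n : ℕ, M < n →
      0 < coeff n (((X ^ s * (1 - X ^ k) - (1 - (X:PowerSeries ℤ) ^ s)) * Sig4 s)
        * ∏ i ∈ Finset.range j, sig (s+(4+i))) := by
    intro j
    induction j with
    | zero => simpa using core s k hs hk
    | succ j ih =>
      apply EP_congr (F := sig (s+(4+j)) *
        (((X ^ s * (1 - X ^ k) - (1 - (X:PowerSeries ℤ) ^ s)) * Sig4 s)
          * ∏ i ∈ Finset.range j, sig (s+(4+i))))
      · rw [Finset.prod_range_succ]; ring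
      · exact EP_sig_mul (s+(4+j)) (by omega) _ ih
  apply EP_congr (F := ((X ^ s * (1 - X ^ k) - (1 - (X:PowerSeries ℤ) ^ s)) * Sig4 s)
      * ∏ i ∈ Finset.range (L-3), sig (s+(4+i)))
  · rw [hHexp, hsplit]; ring
  · exact hEP (L-3)
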